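/- Let P be an N×N doubly stochastic matrix with positive diagonal and connected support graph, and let β = min{P_{ij} : P_{ij} > 0}. Then for every t ≥ 1 and all indices i, j, |[Pᵗ]_{ij} − 1/N| ≤ 2(1 + β^{−N})(1 − β^{N})^{t/N − 1}. -/

import Mathlib

open Matrix Finset

variable {N : ℕ}

lemma myPowNonneg (P : Matrix (Fin N) (Fin N) ℝ) (h : ∀ i j, 0 ≤ P i j) (m : ℕ) :
    ∀ i j, 0 ≤ (P ^ m) i j := by
  induction m with
  | zero =>
    intro i j
    simp only [pow_zero, Matrix.one_apply]
    split <;> norm_num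
  | succ m ih =>
    intro i j
    rw [pow_succ, Matrix.mul_apply]
    exact Finset.sum_nonneg fun k _ => mul_nonneg (ih i k) (h k j)

lemma myPowRow (P : Matrix (Fin N) (Fin N) ℝ) (h : ∀ i, ∑ j, P i j = 1) (m : ℕ) :
    ∀ i, ∑ j, (P ^ m) i j = 1 := by
  induction m with
  | zero => intro i; simp [Matrix.one_apply]
  | succ m ih =>
    intro i
    simp only [pow_succ, Matrix.mul_apply]
    rw [Finset.sum_comm]
    simp_rw [← Finset.mul_sum, h, mul_one]
    exact ih i

lemma myPowCol (P : Matrix (Fin N) (Fin N) ℝ) (h : ∀ j, ∑ i, P i j = 1) (m : ℕ) :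
    ∀ j, ∑ i, (P ^ m) i j = 1 := by
  induction m with
  | zero => intro j; simp [Matrix.one_apply]
  | succ m ih =>
    intro j
    simp only [pow_succ', Matrix.mul_apply]
    rw [Finset.sum_comm]
    simp_rw [← Finset.sum_mul, h, one_mul]
    exact ih j

lemma myQuant (P : Matrix (Fin N) (Fin N) ℝ) (hnn : ∀ i j, 0 ≤ P i j)
    (β : ℝ) (hβ0 : 0 ≤ β) (hβle : ∀ i j, 0 < P i j → β ≤ P i j) (m : ℕ) :
    ∀ i j, 0 < (P ^ m) i j → β ^ m ≤ (P ^ m) i j := by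
  induction m with
  | zero =>
    intro i j h
    simp only [pow_zero, Matrix.one_apply] at h ⊢
    split at h <;> simp_all
  | succ m ih =>
    intro i j h
    rw [pow_succ, Matrix.mul_apply] at h
    rw [pow_succ P m, Matrix.mul_apply]
    obtain ⟨k, -, hk⟩ := Finset.exists_lt_of_sum_lt (by simpa using h :
      ∑ k : Fin N, (0:ℝ) < ∑ k, (P ^ m) i k * P k j)
    have h1 : 0 < (P ^ m) i k := by
      rcases lt_or_ge 0 ((P ^ m) i k) with h' | h'
      · exact h'
      · exfalso; nlinarith [hnn k j, myPowNonneg P hnn m i k]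
    have h2 : 0 < P k j := by nlinarith [myPowNonneg P hnn m i k]
    calc β ^ m * β ≤ (P ^ m) i k * P k j :=
          mul_le_mul (ih i k h1) (hβle k j h2) hβ0 (myPowNonneg P hnn m i k)
      _ ≤ ∑ k, (P ^ m) i k * P k j :=
          Finset.single_le_sum (fun l _ => mul_nonneg (myPowNonneg P hnn m i l) (hnn l j)) (Finset.mem_univ k)

lemma myDiagPos (P : Matrix (Fin N) (Fin N) ℝ) (hnn : ∀ i j, 0 ≤ P i j)
    (hdiag : ∀ i, 0 < P i i) (m : ℕ) : ∀ i, 0 < (P ^ m) i i := by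
  induction m with
  | zero => intro i; simp [Matrix.one_apply]
  | succ m ih =>
    intro i
    rw [pow_succ, Matrix.mul_apply]
    have h1 : 0 < (P ^ m) i i * P i i := mul_pos (ih i) (hdiag i)
    exact lt_of_lt_of_le h1 (Finset.single_le_sum
      (fun l _ => mul_nonneg (myPowNonneg P hnn m i l) (hnn l i)) (Finset.mem_univ i))

lemma myStepPos (P : Matrix (Fin N) (Fin N) ℝ) (hnn : ∀ i j, 0 ≤ P i j) (m : ℕ)
    {i a b : Fin N} (h1 : 0 < (P ^ m) i a) (h2 : 0 < P a b) : 0 < (P ^ (m+1)) i b := by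
  rw [pow_succ, Matrix.mul_apply]
  exact lt_of_lt_of_le (mul_pos h1 h2) (Finset.single_le_sum
    (fun l _ => mul_nonneg (myPowNonneg P hnn m i l) (hnn l b)) (Finset.mem_univ a))

lemma mySupport (hN : 0 < N) (P : Matrix (Fin N) (Fin N) ℝ)
    (hnonneg : ∀ i j, 0 ≤ P i j)
    (hrow : ∀ i, ∑ j, P i j = 1)
    (hcol : ∀ j, ∑ i, P i j = 1)
    (hdiag : ∀ i, 0 < P i i)
    (hconn : (SimpleGraph.mk (fun i j => i ≠ j ∧ (0 < P i j ∨ 0 < P j i))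
      ⟨fun i j h => ⟨h.1.symm, h.2.symm⟩⟩
      ⟨fun i h => h.1 rfl⟩).Connected)
    (i : Fin N) : ∀ j, 0 < (P ^ (N - 1)) i j := by
  set S : ℕ → Finset (Fin N) := fun m => Finset.univ.filter (fun k => 0 < (P ^ m) i k) with hS
  have hmemS : ∀ m k, k ∈ S m ↔ 0 < (P ^ m) i k := by
    intro m k; simp [hS]
  have hmono : ∀ m, S m ⊆ S (m+1) := by
    intro m k hk
    rw [hmemS] at hk ⊢
    exact myStepPos P hnonneg m hk (hdiag k)
  have hiS : ∀ m, i ∈ S m := by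
    intro m; rw [hmemS]; exact myDiagPos P hnonneg hdiag m i
  have hstab : ∀ m, S m = S (m+1) → S m = Finset.univ := by
    intro m hm
    have hfwd : ∀ a ∈ S m, ∀ b, 0 < P a b → b ∈ S m := by
      intro a ha b hb
      rw [hm, hmemS]
      rw [hmemS] at ha
      exact myStepPos P hnonneg m ha hb
    have hrow' : ∀ a ∈ S m, ∑ b ∈ S m, P a b = 1 := by
      intro a ha
      have h0 : ∀ b ∈ (S m)ᶜ, P a b = 0 := by
        intro b hb
        by_contra h
        exact (Finset.mem_compl.mp hb)
          (hfwd a ha b (lt_of_le_of_ne (hnonneg a b) (Ne.symm h)))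
      have h1 := Finset.sum_add_sum_compl (S m) (P a)
      rw [Finset.sum_eq_zero h0, add_zero, hrow a] at h1
      exact h1
    have hcross : ∑ b ∈ S m, ∑ a ∈ (S m)ᶜ, P a b = 0 := by
      have e1 : ∑ a ∈ S m, ∑ b ∈ S m, P a b = (S m).card := by
        rw [Finset.sum_congr rfl hrow']
        simp
      have e2 : ∑ b ∈ S m, ∑ a, P a b = (S m).card := by
        rw [Finset.sum_congr rfl (fun b _ => hcol b)]
        simp
      have e3 : ∀ b ∈ S m, ∑ a, P a b = ∑ a ∈ S m, P a b + ∑ a ∈ (S m)ᶜ, P a b := by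
        intro b _
        exact (Finset.sum_add_sum_compl (S m) (fun a => P a b)).symm
      rw [Finset.sum_congr rfl e3, Finset.sum_add_distrib, Finset.sum_comm, e1] at e2
      linarith
    have hbwd : ∀ b ∈ S m, ∀ a, 0 < P a b → a ∈ S m := by
      intro b hb a ha
      by_contra hna
      have hz : ∑ a' ∈ (S m)ᶜ, P a' b = 0 := by
        have := (Finset.sum_eq_zero_iff_of_nonneg
          (fun b' _ => Finset.sum_nonneg (fun a' _ => hnonneg a' b'))).mp hcross b hb
        exact this
      have := (Finset.sum_eq_zero_iff_of_nonneg
        (fun a' _ => hnonneg a' b)).mp hz a (Finset.mem_compl.mpr hna)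
      linarith
    apply Finset.eq_univ_iff_forall.mpr
    intro j
    obtain ⟨w⟩ := hconn.preconnected i j
    have key : ∀ (u v : Fin N),
        (SimpleGraph.mk (fun i j => i ≠ j ∧ (0 < P i j ∨ 0 < P j i))
          ⟨fun i j h => ⟨h.1.symm, h.2.symm⟩⟩
          ⟨fun i h => h.1 rfl⟩).Walk u v → u ∈ S m → v ∈ S m := by
      intro u v p
      induction p with
      | nil => exact id
      | @cons u' w' v' h p ih =>
        intro hu
        apply ih
        rcases h.2 with h' | h'
        · exact hfwd _ hu _ h'
        · exact hbwd _ hu _ h'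
    exact key i j w (hiS m)
  have hgrow : ∀ k, S k = Finset.univ ∨ k + 1 ≤ (S k).card := by
    intro k
    induction k with
    | zero => exact Or.inr (Finset.one_le_card.mpr ⟨i, hiS 0⟩)
    | succ k ih =>
      rcases ih with h | h
      · exact Or.inl (Finset.univ_subset_iff.mp (h ▸ hmono k))
      · by_cases he : S k = S (k+1)
        · exact Or.inl (he ▸ hstab k he)
        · refine Or.inr ?_
          have hss : S k ⊂ S (k+1) := Finset.ssubset_iff_subset_ne.mpr ⟨hmono k, he⟩
          have := Finset.card_lt_card hss
          omega
  have hfin : S (N - 1) = Finset.univ := by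
    rcases hgrow (N - 1) with h | h
    · exact h
    · apply Finset.eq_univ_of_card
      have h2 : (S (N - 1)).card ≤ N := by
        simpa using Finset.card_le_univ (S (N - 1))
      rw [Fintype.card_fin]
      omega
  intro j
  rw [← hmemS]
  rw [hfin]
  exact Finset.mem_univ j

lemma myMin (hN : 0 < N) (P : Matrix (Fin N) (Fin N) ℝ)
    (hnonneg : ∀ i j, 0 ≤ P i j)
    (hrow : ∀ i, ∑ j, P i j = 1)
    (hcol : ∀ j, ∑ i, P i j = 1)
    (hdiag : ∀ i, 0 < P i i)
    (hconn : (SimpleGraph.mk (fun i j => i ≠ j ∧ (0 < P i j ∨ 0 < P j i))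
      ⟨fun i j h => ⟨h.1.symm, h.2.symm⟩⟩
      ⟨fun i h => h.1 rfl⟩).Connected)
    (β : ℝ) (hβ0 : 0 ≤ β) (hβle : ∀ i j, 0 < P i j → β ≤ P i j) :
    ∀ i j, β ^ N ≤ (P ^ N) i j := by
  intro i j
  have hpos : 0 < (P ^ (N - 1 + 1)) i j :=
    myStepPos P hnonneg (N - 1) (mySupport hN P hnonneg hrow hcol hdiag hconn i j) (hdiag j)
  rw [Nat.sub_add_cancel hN] at hpos
  exact myQuant P hnonneg β hβ0 hβle N i j hpos

lemma myUpper (Q : Matrix (Fin N) (Fin N) ℝ) (δ : ℝ) (hδ : 0 ≤ δ)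
    (hent : ∀ i j, δ ≤ Q i j) (hrowQ : ∀ i, ∑ j, Q i j = 1)
    (v : Fin N → ℝ) (Mv mv : ℝ) (hub : ∀ j, v j ≤ Mv)
    (j0 : Fin N) (hj0 : v j0 = mv) :
    ∀ i, Q.mulVec v i ≤ Mv - δ * (Mv - mv) := by
  intro i
  have hQnn : ∀ a b, 0 ≤ Q a b := fun a b => le_trans hδ (hent a b)
  have hmv : Q.mulVec v i = ∑ j, Q i j * v j := by
    simp [Matrix.mulVec, dotProduct]
  have hsplit := Finset.add_sum_erase Finset.univ (fun j => Q i j * v j) (Finset.mem_univ j0)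
  have hQsum : ∑ j ∈ Finset.univ.erase j0, Q i j = 1 - Q i j0 := by
    have := Finset.add_sum_erase Finset.univ (fun j => Q i j) (Finset.mem_univ j0)
    rw [hrowQ i] at this
    linarith
  have herase : ∑ j ∈ Finset.univ.erase j0, Q i j * v j ≤ (1 - Q i j0) * Mv := by
    rw [← hQsum, Finset.sum_mul]
    exact Finset.sum_le_sum fun j _ => mul_le_mul_of_nonneg_left (hub j) (hQnn i j)
  have hmM : mv ≤ Mv := hj0 ▸ hub j0
  have hd := hent i j0
  rw [hmv, ← hsplit]
  rw [hj0]
  nlinarith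

lemma myLower (Q : Matrix (Fin N) (Fin N) ℝ) (δ : ℝ) (hδ : 0 ≤ δ)
    (hent : ∀ i j, δ ≤ Q i j) (hrowQ : ∀ i, ∑ j, Q i j = 1)
    (v : Fin N → ℝ) (Mv mv : ℝ) (hlb : ∀ j, mv ≤ v j)
    (j1 : Fin N) (hj1 : v j1 = Mv) :
    ∀ i, mv + δ * (Mv - mv) ≤ Q.mulVec v i := by
  intro i
  have hQnn : ∀ a b, 0 ≤ Q a b := fun a b => le_trans hδ (hent a b)
  have hmv : Q.mulVec v i = ∑ j, Q i j * v j := by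
    simp [Matrix.mulVec, dotProduct]
  have hsplit := Finset.add_sum_erase Finset.univ (fun j => Q i j * v j) (Finset.mem_univ j1)
  have hQsum : ∑ j ∈ Finset.univ.erase j1, Q i j = 1 - Q i j1 := by
    have := Finset.add_sum_erase Finset.univ (fun j => Q i j) (Finset.mem_univ j1)
    rw [hrowQ i] at this
    linarith
  have herase : (1 - Q i j1) * mv ≤ ∑ j ∈ Finset.univ.erase j1, Q i j * v j := by
    rw [← hQsum, Finset.sum_mul]
    exact Finset.sum_le_sum fun j _ => mul_le_mul_of_nonneg_left (hlb j) (hQnn i j)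
  have hmM : mv ≤ Mv := hj1 ▸ hlb j1
  have hd := hent i j1
  rw [hmv, ← hsplit]
  rw [hj1]
  nlinarith

lemma myOscStep (hN : 0 < N) (Q : Matrix (Fin N) (Fin N) ℝ) (δ : ℝ) (hδ : 0 ≤ δ)
    (hent : ∀ i j, δ ≤ Q i j) (hrowQ : ∀ i, ∑ j, Q i j = 1) (v : Fin N → ℝ) :
    Finset.univ.sup' ⟨⟨0, hN⟩, Finset.mem_univ _⟩ (Q.mulVec v) -
      Finset.univ.inf' ⟨⟨0, hN⟩, Finset.mem_univ _⟩ (Q.mulVec v) ≤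
    (1 - δ) * (Finset.univ.sup' ⟨⟨0, hN⟩, Finset.mem_univ _⟩ v -
      Finset.univ.inf' ⟨⟨0, hN⟩, Finset.mem_univ _⟩ v) := by
  have hne : (Finset.univ : Finset (Fin N)).Nonempty := ⟨⟨0, hN⟩, Finset.mem_univ _⟩
  obtain ⟨j0, -, hj0⟩ := Finset.exists_mem_eq_inf' hne v
  obtain ⟨j1, -, hj1⟩ := Finset.exists_mem_eq_sup' hne v
  have hub : ∀ k, v k ≤ Finset.univ.sup' hne v := fun k => Finset.le_sup' v (Finset.mem_univ k)
  have hlb : ∀ k, Finset.univ.inf' hne v ≤ v k := fun k => Finset.inf'_le v (Finset.mem_univ k)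
  have hU := myUpper Q δ hδ hent hrowQ v (Finset.univ.sup' hne v) (Finset.univ.inf' hne v)
    hub j0 hj0.symm
  have hLo := myLower Q δ hδ hent hrowQ v (Finset.univ.sup' hne v) (Finset.univ.inf' hne v)
    hlb j1 hj1.symm
  have h1 : Finset.univ.sup' hne (Q.mulVec v) ≤
      Finset.univ.sup' hne v - δ * (Finset.univ.sup' hne v - Finset.univ.inf' hne v) :=
    Finset.sup'_le hne _ (fun a _ => hU a)
  have h2 : Finset.univ.inf' hne v + δ * (Finset.univ.sup' hne v - Finset.univ.inf' hne v) ≤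
      Finset.univ.inf' hne (Q.mulVec v) :=
    Finset.le_inf' hne _ (fun a _ => hLo a)
  have hmM : Finset.univ.inf' hne v ≤ Finset.univ.sup' hne v :=
    le_trans (hlb j1) (hub j1)
  nlinarith

set_option maxHeartbeats 1000000 in
/-- Geometric convergence rate for powers of a doubly stochastic matrix with positive
diagonal and connected support graph: with `β` the smallest positive entry of `P`,
`|[Pᵗ]_{ij} − 1/N| ≤ 2 (1 + β^{−N}) (1 − β^N)^{t/N − 1}`. -/
theorem stmt_6 (N : ℕ) (hN : 0 < N) (P : Matrix (Fin N) (Fin N) ℝ)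
    (hnonneg : ∀ i j, 0 ≤ P i j)
    (hrow : ∀ i, ∑ j, P i j = 1)
    (hcol : ∀ j, ∑ i, P i j = 1)
    (hdiag : ∀ i, 0 < P i i)
    (hconn : (SimpleGraph.mk (fun i j => i ≠ j ∧ (0 < P i j ∨ 0 < P j i))
      ⟨fun i j h => ⟨h.1.symm, h.2.symm⟩⟩
      ⟨fun i h => h.1 rfl⟩).Connected)
    (β : ℝ) (hβpos : 0 < β)
    (hβle : ∀ i j, 0 < P i j → β ≤ P i j)
    (hβmem : ∃ i j, P i j = β) :
    ∀ t : ℕ, 1 ≤ t → ∀ i j,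
      |(P ^ t) i j - 1 / N| ≤
        2 * (1 + β⁻¹ ^ N) * Real.rpow (1 - β ^ N) ((t : ℝ) / N - 1) := by
  intro t ht i j
  have hne : (Finset.univ : Finset (Fin N)).Nonempty := ⟨⟨0, hN⟩, Finset.mem_univ _⟩
  have hNpos : (0:ℝ) < N := by exact_mod_cast hN
  have hβ1 : β ≤ 1 := by
    obtain ⟨i0, j0, hij⟩ := hβmem
    have h1 : P i0 j0 ≤ ∑ l, P i0 l :=
      Finset.single_le_sum (fun l _ => hnonneg i0 l) (Finset.mem_univ j0)
    rw [hrow i0, hij] at h1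
    exact h1
  set δ : ℝ := β ^ N with hδdef
  have hδpos : 0 < δ := pow_pos hβpos N
  have hδ1 : δ ≤ 1 := pow_le_one₀ hβpos.le hβ1
  have hmin : ∀ a b, δ ≤ (P ^ N) a b :=
    myMin hN P hnonneg hrow hcol hdiag hconn β hβpos.le hβle
  have hProw : ∀ m a, ∑ b, (P ^ m) a b = 1 := fun m => myPowRow P hrow m
  have hPcol : ∀ m b, ∑ a, (P ^ m) a b = 1 := fun m => myPowCol P hcol m
  have hPnn : ∀ m a b, 0 ≤ (P ^ m) a b := fun m => myPowNonneg P hnonneg m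
  set c : ℕ → Fin N → ℝ := fun s a => (P ^ s) a j with hc
  set M : ℕ → ℝ := fun s => Finset.univ.sup' hne (c s) with hM
  set L : ℕ → ℝ := fun s => Finset.univ.inf' hne (c s) with hL
  have hcm : ∀ m s, c (m + s) = (P ^ m).mulVec (c s) := by
    intro m s
    funext a
    simp only [hc, Matrix.mulVec, dotProduct, pow_add, Matrix.mul_apply]
  have hstep1 : ∀ s, M (s + 1) - L (s + 1) ≤ M s - L s := by
    intro s
    have e : c (s + 1) = P.mulVec (c s) := by
      rw [Nat.add_comm]
      have := hcm 1 s
      rwa [pow_one] at this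
    have h := myOscStep hN P 0 le_rfl (fun a b => hnonneg a b) hrow (c s)
    rw [← e, sub_zero, one_mul] at h
    exact h
  have hstepN : ∀ s, M (N + s) - L (N + s) ≤ (1 - δ) * (M s - L s) := by
    intro s
    have h := myOscStep hN (P ^ N) δ hδpos.le hmin (hProw N) (c s)
    rw [← hcm N s] at h
    exact h
  have hM0L0 : M 0 - L 0 ≤ 1 := by
    have h1 : M 0 ≤ 1 := by
      apply Finset.sup'_le
      intro a _
      simp only [hc, pow_zero, Matrix.one_apply]
      split <;> norm_num
    have h2 : (0:ℝ) ≤ L 0 := by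
      apply Finset.le_inf'
      intro a _
      exact hPnn 0 a j
    linarith
  have hmono1 : ∀ s, M s - L s ≤ 1 := by
    intro s
    induction s with
    | zero => exact hM0L0
    | succ s ih => linarith [hstep1 s]
  have h1δ : (0:ℝ) ≤ 1 - δ := by linarith
  have hiter : ∀ k r, M (N * k + r) - L (N * k + r) ≤ (1 - δ) ^ k := by
    intro k
    induction k with
    | zero => intro r; simpa using hmono1 r
    | succ k ih =>
      intro r
      have e : N * (k + 1) + r = N + (N * k + r) := by ring
      rw [e]
      calc M (N + (N * k + r)) - L (N + (N * k + r))
          ≤ (1 - δ) * (M (N * k + r) - L (N * k + r)) := hstepN _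
        _ ≤ (1 - δ) * (1 - δ) ^ k := mul_le_mul_of_nonneg_left (ih r) h1δ
        _ = (1 - δ) ^ (k + 1) := by ring
  have hosct : M t - L t ≤ (1 - δ) ^ (t / N) := by
    have h := hiter (t / N) (t % N)
    rwa [Nat.div_add_mod] at h
  have hsum : ∑ a, c t a = 1 := hPcol t j
  have hA : (N:ℝ) * L t ≤ 1 := by
    have h1 : ∑ a : Fin N, L t ≤ ∑ a, c t a :=
      Finset.sum_le_sum (fun a _ => Finset.inf'_le _ (Finset.mem_univ a))
    rw [hsum, Finset.sum_const, Finset.card_univ, Fintype.card_fin, nsmul_eq_mul] at h1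
    exact h1
  have hB : (1:ℝ) ≤ (N:ℝ) * M t := by
    have h1 : ∑ a, c t a ≤ ∑ a : Fin N, M t :=
      Finset.sum_le_sum (fun a _ => Finset.le_sup' _ (Finset.mem_univ a))
    rw [hsum, Finset.sum_const, Finset.card_univ, Fintype.card_fin, nsmul_eq_mul] at h1
    exact h1
  have hLd : L t ≤ 1 / N := by
    rw [le_div_iff₀ hNpos]
    nlinarith
  have hMd : 1 / N ≤ M t := by
    rw [div_le_iff₀ hNpos]
    nlinarith
  have hcL : L t ≤ c t i := Finset.inf'_le _ (Finset.mem_univ i)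
  have hcM : c t i ≤ M t := Finset.le_sup' _ (Finset.mem_univ i)
  have habs : |(P ^ t) i j - 1 / (N:ℝ)| ≤ M t - L t := by
    have hcti : (P ^ t) i j = c t i := rfl
    rw [hcti]
    rw [abs_le]
    constructor <;> linarith
  rcases Nat.lt_or_ge N 2 with hN2 | hN2
  · -- N = 1
    have hN1 : N = 1 := by omega
    subst hN1
    have hj0 : j = 0 := Fin.eq_zero j
    have hval : (P ^ t) i j = 1 := by
      have h1 := hProw t i
      rw [Fin.sum_univ_one] at h1
      rw [hj0]
      exact h1
    rw [hval]
    norm_num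
    apply mul_nonneg
    · have : (0:ℝ) < β⁻¹ ^ 1 := pow_pos (inv_pos.mpr hβpos) 1
      nlinarith
    · exact Real.rpow_nonneg (by nlinarith) _
  · -- N ≥ 2
    have hδlt1 : δ < 1 := by
      have h1 : ∑ b : Fin N, δ ≤ ∑ b, (P ^ N) i b :=
        Finset.sum_le_sum (fun b _ => hmin i b)
      rw [hProw N i, Finset.sum_const, Finset.card_univ, Fintype.card_fin, nsmul_eq_mul] at h1
      have hN2' : (2:ℝ) ≤ N := by exact_mod_cast hN2
      nlinarith
    have h1δpos : (0:ℝ) < 1 - δ := by linarith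
    have hq : ((t:ℝ) / N - 1) ≤ ((t / N : ℕ) : ℝ) := by
      have e : ((N:ℝ) * ((t / N : ℕ):ℝ) + ((t % N : ℕ):ℝ)) = t := by
        exact_mod_cast Nat.div_add_mod t N
      have hm : ((t % N : ℕ):ℝ) < N := by exact_mod_cast Nat.mod_lt t hN
      rw [sub_le_iff_le_add, div_le_iff₀ hNpos]
      nlinarith
    have hrpow : (1 - δ) ^ (t / N) ≤ Real.rpow (1 - δ) ((t:ℝ) / N - 1) := by
      have := Real.rpow_le_rpow_of_exponent_ge h1δpos (by linarith) hq
      rwa [Real.rpow_natCast] at this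
    have hcoef : (1:ℝ) ≤ 2 * (1 + β⁻¹ ^ N) := by
      have h : (0:ℝ) < β⁻¹ ^ N := pow_pos (inv_pos.mpr hβpos) N
      linarith
    have hrnn : (0:ℝ) ≤ Real.rpow (1 - δ) ((t:ℝ) / N - 1) := Real.rpow_nonneg h1δ _
    calc |(P ^ t) i j - 1 / (N:ℝ)| ≤ M t - L t := habs
      _ ≤ (1 - δ) ^ (t / N) := hosct
      _ ≤ Real.rpow (1 - δ) ((t:ℝ) / N - 1) := hrpow
      _ ≤ 2 * (1 + β⁻¹ ^ N) * Real.rpow (1 - δ) ((t:ℝ) / N - 1) :=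
          le_mul_of_one_le_left hrnn hcoef
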